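/- Let x ∈ V(ℤ) and suppose the entire Γ-orbit of x is contained in V(ℤ)\𝔘. Then either every last vertex in the Γ-orbit of x belongs to 𝔗, or every last vertex in the Γ-orbit of x belongs to V(ℤ)\(𝔗 ∪ 𝔘). -/

import Mathlib

/-- The Vieta involution in coordinate `i`:
`x ↦ Function.update x i (αᵢ − xⱼxₗ − xᵢ)` where `j = i+1`, `l = i+2` (mod 3). -/
def vAct (α : Fin 3 → ℤ) (i : Fin 3) (x : Fin 3 → ℤ) : Fin 3 → ℤ :=
  Function.update x i (α i - x (i + 1) * x (i + 2) - x i)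

/-- Membership in the integral cubic surface `V(ℤ)`. -/
def onV (α : Fin 3 → ℤ) (β : ℤ) (x : Fin 3 → ℤ) : Prop :=
  x 0 ^ 2 + x 1 ^ 2 + x 2 ^ 2 + x 0 * x 1 * x 2
    - α 0 * x 0 - α 1 * x 1 - α 2 * x 2 - β = 0

/-- The height function `Δ(x) = |x₁| + |x₂| + |x₃|`. -/
def delta (x : Fin 3 → ℤ) : ℤ := |x 0| + |x 1| + |x 2|

/-- Membership in the finite exceptional set `𝔗`. -/
def inT (α : Fin 3 → ℤ) (β : ℤ) (x : Fin 3 → ℤ) : Prop :=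
  onV α β x ∧ ∃ σ : Equiv.Perm (Fin 3),
    |x (σ 0)| ≤ 1 ∨ |x (σ 1) * x (σ 2)| ≤ max (3 * |α (σ 0)|) 4

/-- Membership in the exceptional set `𝔘`. -/
def inU (α : Fin 3 → ℤ) (β : ℤ) (x : Fin 3 → ℤ) : Prop :=
  onV α β x ∧ ¬ inT α β x ∧ ∃ σ : Equiv.Perm (Fin 3),
    |x (σ 0)| = 2 ∧ delta (vAct α (σ 1) x) ≤ delta x ∧
      delta (vAct α (σ 2) x) ≤ delta x

/-- `y` lies in the `Γ`-orbit of `x`: it is obtained from `x` by a finite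
sequence of Vieta involutions. -/
def gammaRel (α : Fin 3 → ℤ) (x y : Fin 3 → ℤ) : Prop :=
  ∃ L : List (Fin 3), y = L.foldl (fun z i => vAct α i z) x

/-- `y` lies in the `Γ₀`-orbit (mapping class group orbit) of `x`: it is
obtained from `x` by an even-length sequence of Vieta involutions. -/
def gamma0Rel (α : Fin 3 → ℤ) (x y : Fin 3 → ℤ) : Prop :=
  ∃ L : List (Fin 3), L.length % 2 = 0 ∧ y = L.foldl (fun z i => vAct α i z) x

/-- `y` is a descendent of `x`: obtained by a finite sequence of Vieta
involutions along which `Δ` is non-increasing at every step. -/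
def descendent (α : Fin 3 → ℤ) (x y : Fin 3 → ℤ) : Prop :=
  ∃ L : List (Fin 3), y = L.foldl (fun z i => vAct α i z) x ∧
    ∀ t < L.length,
      delta ((L.take (t + 1)).foldl (fun z i => vAct α i z) x) ≤
        delta ((L.take t).foldl (fun z i => vAct α i z) x)

/-- Membership in `𝔗' = {𝒱ᵢ(x), 𝒱ⱼ𝒱ᵢ(x) : x ∈ 𝔗}`. -/
def inT' (α : Fin 3 → ℤ) (β : ℤ) (x : Fin 3 → ℤ) : Prop :=
  ∃ y, inT α β y ∧
    ((∃ i, x = vAct α i y) ∨ ∃ i j, x = vAct α j (vAct α i y))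

/-- Membership in `𝔘' = {𝒱ᵢ(x), 𝒱ⱼ𝒱ᵢ(x) : x ∈ 𝔘}`. -/
def inU' (α : Fin 3 → ℤ) (β : ℤ) (x : Fin 3 → ℤ) : Prop :=
  ∃ y, inU α β y ∧
    ((∃ i, x = vAct α i y) ∨ ∃ i j, x = vAct α j (vAct α i y))

section CorAux

variable {α : Fin 3 → ℤ} {β : ℤ}

lemma fin3_add : ∀ i : Fin 3, i + 1 ≠ i ∧ i + 2 ≠ i ∧ i + 1 + 1 = i + 2 ∧
    i + 1 + 2 = i ∧ i + 2 + 1 = i ∧ i + 2 + 2 = i + 1 ∧ i + 1 ≠ i + 2 := by decide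

lemma vAct_self (i : Fin 3) (x : Fin 3 → ℤ) :
    vAct α i x i = α i - x (i + 1) * x (i + 2) - x i := by simp [vAct]

lemma vAct_ne {i j : Fin 3} (h : j ≠ i) (x : Fin 3 → ℤ) : vAct α i x j = x j := by
  simp [vAct, Function.update_of_ne h]

lemma vAct_invol (i : Fin 3) (x : Fin 3 → ℤ) : vAct α i (vAct α i x) = x := by
  funext j
  by_cases h : j = i
  · subst h
    rw [vAct_self, vAct_self, vAct_ne (fin3_add j).1, vAct_ne (fin3_add j).2.1]; ring
  · rw [vAct_ne h, vAct_ne h]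

lemma delta_vAct (i : Fin 3) (x : Fin 3 → ℤ) :
    delta (vAct α i x) = delta x - |x i| + |vAct α i x i| := by
  fin_cases i <;>
    simp [delta, vAct, Function.update_apply, show ((0:Fin 3) = 1) = False by decide,
      show ((1:Fin 3) = 0) = False by decide, show ((2:Fin 3) = 0) = False by decide,
      show ((0:Fin 3) = 2) = False by decide, show ((1:Fin 3) = 2) = False by decide,
      show ((2:Fin 3) = 1) = False by decide] <;> ring

lemma fin3_resolve : ∀ a b c : Fin 3, a ≠ b → a ≠ c → b ≠ c →
    (b = a + 1 ∧ c = a + 2) ∨ (b = a + 2 ∧ c = a + 1) := by decide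

lemma inT_iff (x : Fin 3 → ℤ) : inT α β x ↔ onV α β x ∧ ∃ i : Fin 3,
    |x i| ≤ 1 ∨ |x (i + 1) * x (i + 2)| ≤ max (3 * |α i|) 4 := by
  constructor
  · rintro ⟨hV, σ, h⟩
    refine ⟨hV, σ 0, ?_⟩
    have h1 := σ.injective.ne (show (0:Fin 3) ≠ 1 by decide)
    have h2 := σ.injective.ne (show (0:Fin 3) ≠ 2 by decide)
    have h12 := σ.injective.ne (show (1:Fin 3) ≠ 2 by decide)
    rcases fin3_resolve (σ 0) (σ 1) (σ 2) h1 h2 h12 with ⟨e1, e2⟩ | ⟨e1, e2⟩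
    · rw [e1, e2] at h; exact h
    · rw [e1, e2] at h
      rcases h with h | h
      · exact Or.inl h
      · exact Or.inr (by rwa [mul_comm] at h)
  · rintro ⟨hV, i, h⟩
    exact ⟨hV, Equiv.addLeft i, by simpa using h⟩

lemma inU_iff (x : Fin 3 → ℤ) : inU α β x ↔ onV α β x ∧ ¬ inT α β x ∧ ∃ i : Fin 3,
    |x i| = 2 ∧ delta (vAct α (i + 1) x) ≤ delta x ∧
      delta (vAct α (i + 2) x) ≤ delta x := by
  constructor
  · rintro ⟨hV, hT, σ, h0, h1', h2'⟩
    refine ⟨hV, hT, σ 0, ?_⟩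
    have h1 := σ.injective.ne (show (0:Fin 3) ≠ 1 by decide)
    have h2 := σ.injective.ne (show (0:Fin 3) ≠ 2 by decide)
    have h12 := σ.injective.ne (show (1:Fin 3) ≠ 2 by decide)
    rcases fin3_resolve (σ 0) (σ 1) (σ 2) h1 h2 h12 with ⟨e1, e2⟩ | ⟨e1, e2⟩
    · rw [e1] at h1'; rw [e2] at h2'; exact ⟨h0, h1', h2'⟩
    · rw [e1] at h1'; rw [e2] at h2'; exact ⟨h0, h2', h1'⟩
  · rintro ⟨hV, hT, i, h0, h1', h2'⟩
    exact ⟨hV, hT, Equiv.addLeft i, by simpa using ⟨h0, h1', h2'⟩⟩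

lemma notT_facts {x : Fin 3 → ℤ} (hV : onV α β x) (hT : ¬ inT α β x) (i : Fin 3) :
    2 ≤ |x i| ∧ max (3 * |α i|) 4 < |x (i + 1) * x (i + 2)| := by
  rw [inT_iff] at hT
  push_neg at hT
  obtain ⟨h1, h2⟩ := hT hV i
  exact ⟨by omega, h2⟩

lemma core_A {xi xj xl aj al : ℤ} (h3 : 3 ≤ |xi|)
    (hj : 3 * |aj| < |xi * xl|) (hl : 3 * |al| < |xi * xj|)
    (dj : |aj - xi * xl - xj| ≤ |xj|) (dl : |al - xi * xj - xl| ≤ |xl|) : False := by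
  have bj : |xi * xl| ≤ |aj| + 2 * |xj| := by
    rcases abs_le.mp dj with ⟨d1, d2⟩
    have := le_abs_self aj; have := neg_abs_le aj
    have := le_abs_self xj; have := neg_abs_le xj
    rw [abs_le]; constructor <;> linarith
  have bl : |xi * xj| ≤ |al| + 2 * |xl| := by
    rcases abs_le.mp dl with ⟨d1, d2⟩
    have := le_abs_self al; have := neg_abs_le al
    have := le_abs_self xl; have := neg_abs_le xl
    rw [abs_le]; constructor <;> linarith
  rw [abs_mul] at bj bl hj hl
  have tj : 3 * |xj| ≤ |xi| * |xj| := by nlinarith [abs_nonneg xj]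
  have tl : 3 * |xl| ≤ |xi| * |xl| := by nlinarith [abs_nonneg xl]
  linarith

lemma core_B {xi xj xl ai : ℤ} (hi : 3 * |ai| < |xj * xl|)
    (h : |ai - xj * xl - xi| = |xi|) : ai - xj * xl - xi = xi := by
  rcases abs_eq_abs.mp h with h' | h'
  · exact h'
  · exfalso
    have e : ai = xj * xl := by linarith
    rw [← e] at hi
    have := abs_nonneg ai
    linarith

lemma delta_vAct_le {i : Fin 3} {x : Fin 3 → ℤ}
    (h : delta (vAct α i x) ≤ delta x) :
    |α i - x (i + 1) * x (i + 2) - x i| ≤ |x i| := by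
  rw [delta_vAct, vAct_self] at h; linarith

lemma lemA_rot {x : Fin 3 → ℤ} (hV : onV α β x) (hT : ¬ inT α β x) (hU : ¬ inU α β x)
    (i : Fin 3)
    (h1 : delta (vAct α (i + 1) x) ≤ delta x)
    (h2 : delta (vAct α (i + 2) x) ≤ delta x) : False := by
  have f := notT_facts hV hT
  have hxi : 2 ≤ |x i| := (f i).1
  rcases eq_or_lt_of_le hxi with he | h3
  · exact hU ((inU_iff x).mpr ⟨hV, hT, i, he.symm, h1, h2⟩)
  · have d1 := delta_vAct_le (α := α) h1
    have d2 := delta_vAct_le (α := α) h2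
    obtain ⟨e1, e2, e11, e12, e21, e22, e3⟩ := fin3_add i
    rw [e11, e12] at d1
    rw [e21, e22] at d2
    have hj := (f (i + 1)).2
    rw [e11, e12] at hj
    have hl := (f (i + 2)).2
    rw [e21, e22] at hl
    refine core_A (xi := x i) (xj := x (i + 1)) (xl := x (i + 2))
      (aj := α (i + 1)) (al := α (i + 2)) h3 ?_ ?_ ?_ ?_
    · calc 3 * |α (i+1)| ≤ max (3 * |α (i+1)|) 4 := le_max_left _ _
        _ < |x (i+2) * x i| := hj
        _ = |x i * x (i+2)| := by rw [mul_comm]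
    · calc 3 * |α (i+2)| ≤ max (3 * |α (i+2)|) 4 := le_max_left _ _
        _ < |x i * x (i+1)| := hl
    · rwa [mul_comm (x i) (x (i+2))]
    · exact d2

lemma lemA {x : Fin 3 → ℤ} (hV : onV α β x) (hT : ¬ inT α β x) (hU : ¬ inU α β x)
    {a b : Fin 3} (hab : a ≠ b)
    (ha : delta (vAct α a x) ≤ delta x) (hb : delta (vAct α b x) ≤ delta x) : False := by
  have key : ∀ a b : Fin 3, a ≠ b →
      ∃ i : Fin 3, (a = i + 1 ∧ b = i + 2) ∨ (a = i + 2 ∧ b = i + 1) := by decide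
  obtain ⟨i, h | h⟩ := key a b hab
  · exact lemA_rot hV hT hU i (h.1 ▸ ha) (h.2 ▸ hb)
  · exact lemA_rot hV hT hU i (h.2 ▸ hb) (h.1 ▸ ha)

lemma lemB {x : Fin 3 → ℤ} (hV : onV α β x) (hT : ¬ inT α β x) (i : Fin 3)
    (h : delta (vAct α i x) = delta x) : vAct α i x = x := by
  have f := (notT_facts hV hT i).2
  have habs : |vAct α i x i| = |x i| := by
    rw [delta_vAct] at h; linarith
  rw [vAct_self] at habs
  have hval := core_B (lt_of_le_of_lt (le_max_left _ _) f) habs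
  have hupd : vAct α i x = Function.update x i (x i) := by
    unfold vAct; rw [hval]
  rw [hupd, Function.update_eq_self]

lemma lemC {x : Fin 3 → ℤ} (hV : onV α β x) (hT : ¬ inT α β x) (i : Fin 3)
    (hy : inT α β (vAct α i x)) : delta (vAct α i x) < delta x := by
  have f := notT_facts hV hT
  obtain ⟨hVy, m, hm⟩ := (inT_iff (vAct α i x)).mp hy
  suffices hvi : |vAct α i x i| < |x i| by
    rw [delta_vAct]; linarith
  obtain ⟨e1, e2, e11, e12, e21, e22, e3⟩ := fin3_add i
  have yi1 : vAct α i x (i + 1) = x (i + 1) := vAct_ne e1 x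
  have yi2 : vAct α i x (i + 2) = x (i + 2) := vAct_ne e2 x
  have hm3 : m = i ∨ m = i + 1 ∨ m = i + 2 := by
    have : ∀ m i : Fin 3, m = i ∨ m = i + 1 ∨ m = i + 2 := by decide
    exact this m i
  rcases hm3 with rfl | rfl | rfl
  · rcases hm with h | h
    · have := (f m).1; linarith
    · exfalso
      rw [yi1, yi2] at h
      have := (f m).2; linarith
  · rcases hm with h | h
    · exfalso; rw [yi1] at h; have := (f (i + 1)).1; linarith
    · rw [e11, e12, yi2] at h
      have hb := (f (i + 1)).2
      rw [e11, e12] at hb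
      have hlt := lt_of_le_of_lt h hb
      rw [abs_mul, abs_mul] at hlt
      exact lt_of_mul_lt_mul_left hlt (abs_nonneg _)
  · rcases hm with h | h
    · exfalso; rw [yi2] at h; have := (f (i + 2)).1; linarith
    · rw [e21, e22, yi1] at h
      have hb := (f (i + 2)).2
      rw [e21, e22] at hb
      have hlt := lt_of_le_of_lt h hb
      rw [abs_mul, abs_mul] at hlt
      exact lt_of_mul_lt_mul_right hlt (abs_nonneg _)

lemma gammaRel_refl (x : Fin 3 → ℤ) : gammaRel α x x := ⟨[], rfl⟩

lemma gammaRel_trans {x y z : Fin 3 → ℤ} (h1 : gammaRel α x y) (h2 : gammaRel α y z) :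
    gammaRel α x z := by
  obtain ⟨L1, rfl⟩ := h1
  obtain ⟨L2, rfl⟩ := h2
  exact ⟨L1 ++ L2, by rw [List.foldl_append]⟩

lemma gammaRel_step (x : Fin 3 → ℤ) (i : Fin 3) : gammaRel α x (vAct α i x) := ⟨[i], rfl⟩

lemma foldl_rev (L : List (Fin 3)) (x : Fin 3 → ℤ) :
    L.reverse.foldl (fun z i => vAct α i z) (L.foldl (fun z i => vAct α i z) x) = x := by
  induction L generalizing x with
  | nil => rfl
  | cons i L ih =>
    rw [List.foldl_cons, List.reverse_cons, List.foldl_append, ih (vAct α i x)]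
    simp [vAct_invol]

lemma gammaRel_symm {x y : Fin 3 → ℤ} (h : gammaRel α x y) : gammaRel α y x := by
  obtain ⟨L, rfl⟩ := h
  exact ⟨L.reverse, (foldl_rev L x).symm⟩

lemma exists_reduced (L : List (Fin 3)) (x : Fin 3 → ℤ) :
    ∃ L' : List (Fin 3), List.Chain' (· ≠ ·) L' ∧
      L'.foldl (fun z i => vAct α i z) x = L.foldl (fun z i => vAct α i z) x := by
  induction L generalizing x with
  | nil => exact ⟨[], List.isChain_nil, rfl⟩
  | cons i L ih =>
    obtain ⟨L', hc, he⟩ := ih (vAct α i x)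
    match L', hc, he with
    | [], _, he => exact ⟨[i], List.isChain_singleton i, by simpa using he⟩
    | j :: R, hc, he =>
      by_cases hij : i = j
      · subst hij
        refine ⟨R, hc.tail, ?_⟩
        rw [List.foldl_cons] at he ⊢
        rw [vAct_invol] at he
        exact he
      · exact ⟨i :: j :: R, List.isChain_cons_cons.mpr ⟨hij, hc⟩, by
          rw [List.foldl_cons]; exact he⟩

lemma climb {z : Fin 3 → ℤ} (horbz : ∀ y, gammaRel α z y → onV α β y ∧ ¬ inU α β y)
    (L : List (Fin 3)) :
    ∀ p q : Fin 3 → ℤ, ∀ j : Fin 3, gammaRel α z q →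
    List.Chain' (· ≠ ·) (j :: L) → q = vAct α j p → delta p < delta q →
    ¬ inT α β q →
    ∃ i, delta (vAct α i (L.foldl (fun w k => vAct α k w) q)) <
      delta (L.foldl (fun w k => vAct α k w) q) := by
  induction L with
  | nil =>
    intro p q j _ _ hpq hd _
    refine ⟨j, ?_⟩
    have hback : vAct α j q = p := by rw [hpq, vAct_invol]
    simpa [hback] using hd
  | cons i L ih =>
    intro p q j hq hcha hpq hd hT
    have hij : j ≠ i := (List.isChain_cons_cons.mp hcha).1
    obtain ⟨hqV, hqU⟩ := horbz q hq
    have hback : vAct α j q = p := by rw [hpq, vAct_invol]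
    have hstep : delta q < delta (vAct α i q) := by
      by_contra hcon
      push_neg at hcon
      exact lemA hqV hT hqU hij (by rw [hback]; exact le_of_lt hd) hcon
    have hq' : gammaRel α z (vAct α i q) := gammaRel_trans hq (gammaRel_step q i)
    have hT' : ¬ inT α β (vAct α i q) := fun h =>
      absurd (lemC hqV hT i h) (not_lt.mpr (le_of_lt hstep))
    have := ih q (vAct α i q) i hq' ((List.isChain_cons_cons.mp hcha).2) rfl hstep hT'
    simpa using this

lemma unique_last {z : Fin 3 → ℤ} (horbz : ∀ y, gammaRel α z y → onV α β y ∧ ¬ inU α β y)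
    (hzT : ¬ inT α β z) (hzlast : ∀ i, delta z ≤ delta (vAct α i z))
    (L : List (Fin 3)) (hch : List.Chain' (· ≠ ·) L)
    (hlast : ∀ i, delta (L.foldl (fun w k => vAct α k w) z) ≤
      delta (vAct α i (L.foldl (fun w k => vAct α k w) z))) :
    L.foldl (fun w k => vAct α k w) z = z := by
  induction L with
  | nil => rfl
  | cons j L ih =>
    have hzV := (horbz z (gammaRel_refl z)).1
    rcases lt_or_eq_of_le (hzlast j) with hlt | heq
    · exfalso
      have hT' : ¬ inT α β (vAct α j z) := fun h =>
        absurd (lemC hzV hzT j h) (not_lt.mpr (le_of_lt hlt))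
      obtain ⟨i, hi⟩ := climb horbz L z (vAct α j z) j (gammaRel_step z j) hch rfl hlt hT'
      have hfold : (j :: L).foldl (fun w k => vAct α k w) z =
          L.foldl (fun w k => vAct α k w) (vAct α j z) := by rw [List.foldl_cons]
      rw [hfold] at hlast
      exact absurd (hlast i) (not_le.mpr hi)
    · have hfix : vAct α j z = z := lemB hzV hzT j heq.symm
      have hfold : (j :: L).foldl (fun w k => vAct α k w) z =
          L.foldl (fun w k => vAct α k w) z := by rw [List.foldl_cons, hfix]
      rw [hfold] at hlast
      rw [hfold]
      exact ih hch.tail hlast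

end CorAux

/-- If the `Γ`-orbit of `x` avoids `𝔘`, then either all last vertices of the
orbit are in `𝔗`, or all are in `V(ℤ) \ (𝔗 ∪ 𝔘)`. -/
theorem cor_2_5_dichotomy (α : Fin 3 → ℤ) (β : ℤ) (x : Fin 3 → ℤ)
    (hx : onV α β x)
    (horb : ∀ y, gammaRel α x y → onV α β y ∧ ¬ inU α β y) :
    (∀ y, gammaRel α x y → (∀ i : Fin 3, delta y ≤ delta (vAct α i y)) →
      inT α β y) ∨
    (∀ y, gammaRel α x y → (∀ i : Fin 3, delta y ≤ delta (vAct α i y)) →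
      onV α β y ∧ ¬ inT α β y ∧ ¬ inU α β y) := by
  by_cases hc : ∀ y, gammaRel α x y → (∀ i : Fin 3, delta y ≤ delta (vAct α i y)) →
      inT α β y
  · exact Or.inl hc
  · right
    push_neg at hc
    obtain ⟨z, hz, hzlast, hzT⟩ := hc
    have horbz : ∀ y, gammaRel α z y → onV α β y ∧ ¬ inU α β y :=
      fun y hy => horb y (gammaRel_trans hz hy)
    intro w hw hwlast
    obtain ⟨L, hLfold⟩ := gammaRel_trans (gammaRel_symm hz) hw
    obtain ⟨L', hch, he⟩ := exists_reduced (α := α) L z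
    have hwz : w = z := by
      have hwe : L'.foldl (fun u k => vAct α k u) z = w := by rw [he, ← hLfold]
      have := unique_last horbz hzT hzlast L' hch (by rw [hwe]; exact hwlast)
      rw [← hwe, this]
    refine ⟨(horb w hw).1, ?_, (horb w hw).2⟩
    rw [hwz]; exact hzT
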